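/- arXiv:2302.03886 — 3 statements merged into one kernel-verified Lean document; each statement's English description precedes it below -/
import Mathlib

section
/- For every order-N real tensor X of shape (I_1,…,I_N) there exist orthogonal matrices U^(n) ∈ ℝ^{I_n×I_n} for n = 1,…,N and a tensor S ∈ ℝ^{I_1×⋯×I_N} such that X = S ×_1 U^(1) ×_2 ⋯ ×_N U^(N), and for every n ∈ [N]: (i) all-orthogonality: ⟨S_{i_n=α}, S_{i_n=β}⟩ = 0 whenever α ≠ β, where S_{i_n=α} denotes the order-(N−1) subtensor of S obtained by fixing the n-th index to α; (ii) ordering: ‖S_{i_n=1}‖_F ≥ ‖S_{i_n=2}‖_F ≥ ⋯ ≥ ‖S_{i_n=I_n}‖_F ≥ 0; and (iii) ‖S_{i_n=i}‖_F = σ_i^(n), the i-th largest singular value of the mode-n unfolding X_(n). -/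
open scoped BigOperators
open Matrix

/-- Combine a fixed `n`-th coordinate with coordinates for the remaining modes. -/
def fullIdx {N : ℕ} {I : Fin N → ℕ} (n : Fin N) (i : Fin (I n))
    (j : ∀ m : {m : Fin N // m ≠ n}, Fin (I m.1)) : ∀ k, Fin (I k) :=
  fun k => if h : k = n then Fin.cast (congrArg I h).symm i else j ⟨k, h⟩

/-- Mode-`n` unfolding of a tensor. -/
def modeUnfold {N : ℕ} {I : Fin N → ℕ} (X : (∀ k, Fin (I k)) → ℝ) (n : Fin N) :
    Matrix (Fin (I n)) (∀ m : {m : Fin N // m ≠ n}, Fin (I m.1)) ℝ :=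
  fun i j => X (fullIdx n i j)

/-- Squared Frobenius norm of a tensor. -/
noncomputable def frobSq {N : ℕ} {I : Fin N → ℕ} (X : (∀ k, Fin (I k)) → ℝ) : ℝ :=
  ∑ i : ∀ k, Fin (I k), (X i) ^ 2

/-- Tucker/multilinear reconstruction `G ×₁ A 1 ×₂ ⋯ ×_N A N`. -/
noncomputable def tucker {N : ℕ} {I R : Fin N → ℕ} (G : (∀ k, Fin (R k)) → ℝ)
    (A : ∀ n, Matrix (Fin (I n)) (Fin (R n)) ℝ) : (∀ k, Fin (I k)) → ℝ :=
  fun i => ∑ j : ∀ k, Fin (R k), G j * ∏ n, A n (i n) (j n)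

/-- Optimal rank-`R` Tucker loss `L(X, R)`. -/
noncomputable def tuckerLoss {N : ℕ} (I : Fin N → ℕ) (X : (∀ k, Fin (I k)) → ℝ)
    (R : Fin N → ℕ) : ℝ :=
  sInf {v : ℝ | ∃ (G : (∀ k, Fin (R k)) → ℝ)
    (A : ∀ n, Matrix (Fin (I n)) (Fin (R n)) ℝ),
    v = frobSq (fun i => X i - tucker G A i)}

/-- `σ` lists the singular values of `M` in nonincreasing order:
entries are nonnegative, nonincreasing, and their squares are the eigenvalues
of the positive semidefinite matrix `M * Mᵀ` (up to a permutation). -/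
def IsSingularValues {k : ℕ} {c : Type*} [Fintype c]
    (M : Matrix (Fin k) c ℝ) (σ : Fin k → ℝ) : Prop :=
  (∀ i, 0 ≤ σ i) ∧ Antitone σ ∧
    ∃ e : Equiv.Perm (Fin k), ∀ i, σ i ^ 2 =
      (Matrix.isHermitian_mul_conjTranspose_self M).eigenvalues (e i)

/-- Truncation of a tensor to the leading `R`-block. -/
def truncate {N : ℕ} {I : Fin N → ℕ} (S : (∀ k, Fin (I k)) → ℝ)
    (R : Fin N → ℕ) : (∀ k, Fin (I k)) → ℝ :=
  fun i => if ∀ n, (i n : ℕ) < R n then S i else 0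

/-- Surrogate loss `L̃(X, R)`: sum of the squared tail singular values. -/
noncomputable def surrLoss {N : ℕ} {I : Fin N → ℕ} (σ : ∀ n, Fin (I n) → ℝ)
    (R : Fin N → ℕ) : ℝ :=
  ∑ n, ∑ i ∈ Finset.univ.filter (fun i : Fin (I n) => R n ≤ (i : ℕ)), σ n i ^ 2

/-- Packing objective: sum of the squared leading singular values. -/
noncomputable def packObj {N : ℕ} {I : Fin N → ℕ} (σ : ∀ n, Fin (I n) → ℝ)
    (R : Fin N → ℕ) : ℝ :=
  ∑ n, ∑ i ∈ Finset.univ.filter (fun i : Fin (I n) => (i : ℕ) < R n), σ n i ^ 2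

section HOSVDAux

@[simp] lemma fullIdx_same {N : ℕ} {I : Fin N → ℕ} (n : Fin N) (i : Fin (I n))
    (j : ∀ m : {m : Fin N // m ≠ n}, Fin (I m.1)) : fullIdx n i j n = i := by
  simp only [fullIdx, dif_pos rfl]
  exact Fin.ext rfl

@[simp] lemma fullIdx_ne {N : ℕ} {I : Fin N → ℕ} (n : Fin N) (i : Fin (I n))
    (j : ∀ m : {m : Fin N // m ≠ n}, Fin (I m.1)) (m : Fin N) (h : m ≠ n) :
    fullIdx n i j m = j ⟨m, h⟩ := by
  simp only [fullIdx, dif_neg h]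

def splitEquiv {N : ℕ} (I : Fin N → ℕ) (n : Fin N) :
    (Fin (I n) × ∀ m : {m : Fin N // m ≠ n}, Fin (I m.1)) ≃ (∀ k, Fin (I k)) where
  toFun p := fullIdx n p.1 p.2
  invFun k := (k n, fun m => k m.1)
  left_inv p := by
    ext
    · simp
    · next m => simp [fullIdx_ne n p.1 p.2 m.1 m.2]
  right_inv k := by
    funext m
    by_cases h : m = n
    · subst h; simp
    · simp [fullIdx_ne _ _ _ _ h]

lemma sum_pi_split {N : ℕ} {I : Fin N → ℕ} (n : Fin N) (f : (∀ k, Fin (I k)) → ℝ) :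
    ∑ k : ∀ k, Fin (I k), f k
      = ∑ a : Fin (I n), ∑ j : ∀ m : {m : Fin N // m ≠ n}, Fin (I m.1),
          f (fullIdx n a j) := by
  rw [← Equiv.sum_comp (splitEquiv I n) f, Fintype.sum_prod_type]
  rfl

lemma prod_split {N : ℕ} (n : Fin N) (g : Fin N → ℝ) :
    ∏ m, g m = g n * ∏ m : {m : Fin N // m ≠ n}, g m.1 := by
  rw [← Finset.mul_prod_erase Finset.univ g (Finset.mem_univ n)]
  congr 1
  rw [← Finset.prod_subtype (Finset.univ.erase n) (p := fun m => m ≠ n) (by simp) g]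

variable {N : ℕ} {I : Fin N → ℕ}

lemma hosvd_gram (X : (∀ k, Fin (I k)) → ℝ) (U : ∀ m, Matrix (Fin (I m)) (Fin (I m)) ℝ)
    (hU : ∀ m, U m * (U m)ᵀ = 1) (n : Fin N) (α β : Fin (I n)) :
    ∑ j, modeUnfold (tucker X (fun m => (U m)ᵀ)) n α j
        * modeUnfold (tucker X (fun m => (U m)ᵀ)) n β j
      = ∑ a, ∑ b, U n a α * U n b β
          * ∑ j, X (fullIdx n a j) * X (fullIdx n b j) := by
  classical
  have hP : ∀ (γ : Fin (I n)) (j : ∀ m : {m : Fin N // m ≠ n}, Fin (I m.1))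
      (k : ∀ m, Fin (I m)),
      (∏ m, U m (k m) (fullIdx n γ j m))
        = U n (k n) γ * ∏ m : {m : Fin N // m ≠ n}, U m.1 (k m.1) (j m) := by
    intro γ j k
    rw [prod_split n (fun m => U m (k m) (fullIdx n γ j m))]
    congr 1
    · rw [fullIdx_same]
    · exact Finset.prod_congr rfl fun m _ => by rw [fullIdx_ne n γ j m.1 m.2]
  calc
    ∑ j, modeUnfold (tucker X (fun m => (U m)ᵀ)) n α j
        * modeUnfold (tucker X (fun m => (U m)ᵀ)) n β j
      = ∑ j : ∀ m : {m : Fin N // m ≠ n}, Fin (I m.1), (∑ k : ∀ m, Fin (I m), X k *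
            (U n (k n) α * ∏ m : {m : Fin N // m ≠ n}, U m.1 (k m.1) (j m)))
          * (∑ l : ∀ m, Fin (I m), X l *
            (U n (l n) β * ∏ m : {m : Fin N // m ≠ n}, U m.1 (l m.1) (j m))) := by
        simp only [modeUnfold, tucker, Matrix.transpose_apply, hP]
    _ = ∑ k : ∀ m, Fin (I m), ∑ l : ∀ m, Fin (I m),
          (X k * U n (k n) α) * (X l * U n (l n) β) *
          ∑ j : ∀ m : {m : Fin N // m ≠ n}, Fin (I m.1), ∏ m : {m : Fin N // m ≠ n}, (U m.1 (k m.1) (j m) * U m.1 (l m.1) (j m)) := by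
        simp only [Finset.sum_mul_sum]
        rw [Finset.sum_comm]
        refine Finset.sum_congr rfl fun k _ => ?_
        rw [Finset.sum_comm]
        refine Finset.sum_congr rfl fun l _ => ?_
        rw [Finset.mul_sum]
        refine Finset.sum_congr rfl fun j _ => ?_
        rw [Finset.prod_mul_distrib]
        ring
    _ = ∑ k : ∀ m, Fin (I m), ∑ l : ∀ m, Fin (I m),
          (X k * U n (k n) α) * (X l * U n (l n) β) *
          if (∀ m : {m : Fin N // m ≠ n}, k m.1 = l m.1) then 1 else 0 := by
        refine Finset.sum_congr rfl fun k _ => Finset.sum_congr rfl fun l _ => ?_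
        congr 1
        have h2 := Finset.prod_univ_sum (κ := fun m : {m : Fin N // m ≠ n} => Fin (I m.1))
          (fun _ => Finset.univ) (fun m t => U m.1 (k m.1) t * U m.1 (l m.1) t)
        rw [Fintype.piFinset_univ] at h2
        rw [← h2]
        have hUU : ∀ m : {m : Fin N // m ≠ n},
            (∑ t, U m.1 (k m.1) t * U m.1 (l m.1) t)
              = if k m.1 = l m.1 then (1:ℝ) else 0 := by
          intro m
          have h3 := congrFun (congrFun (hU m.1) (k m.1)) (l m.1)
          rw [Matrix.mul_apply] at h3
          simp only [Matrix.transpose_apply, Matrix.one_apply] at h3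
          exact h3
        simp only [hUU]
        rw [Finset.prod_boole]
        simp
    _ = ∑ k : ∀ m, Fin (I m), ∑ b,
          (X k * U n (k n) α) * (X (fullIdx n b (fun m => k m.1)) * U n b β) := by
        refine Finset.sum_congr rfl fun k _ => ?_
        rw [sum_pi_split n (fun l => (X k * U n (k n) α) * (X l * U n (l n) β) *
          if (∀ m : {m : Fin N // m ≠ n}, k m.1 = l m.1) then 1 else 0)]
        refine Finset.sum_congr rfl fun b _ => ?_
        have hcond : ∀ j' : ∀ m : {m : Fin N // m ≠ n}, Fin (I m.1),
            (∀ m : {m : Fin N // m ≠ n}, k m.1 = fullIdx n b j' m.1)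
              ↔ ((fun m : {m : Fin N // m ≠ n} => k m.1) = j') := by
          intro j'
          rw [funext_iff]
          constructor
          · intro h m; exact (h m).trans (fullIdx_ne n b j' m.1 m.2)
          · intro h m; rw [fullIdx_ne n b j' m.1 m.2]; exact h m
        simp only [hcond, fullIdx_same, mul_ite, mul_one, mul_zero]
        rw [Finset.sum_ite_eq]
        simp
    _ = ∑ a, ∑ b, U n a α * U n b β * ∑ j, X (fullIdx n a j) * X (fullIdx n b j) := by
        rw [sum_pi_split n (fun k => ∑ b,
          (X k * U n (k n) α) * (X (fullIdx n b (fun m => k m.1)) * U n b β))]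
        refine Finset.sum_congr rfl fun a _ => ?_
        rw [Finset.sum_comm]
        refine Finset.sum_congr rfl fun b _ => ?_
        rw [Finset.mul_sum]
        refine Finset.sum_congr rfl fun j _ => ?_
        have h1 : fullIdx n a j n = a := fullIdx_same n a j
        have h2 : (fun m : {m : Fin N // m ≠ n} => fullIdx n a j m.1) = j := by
          funext m; rw [fullIdx_ne n a j m.1 m.2]
        rw [h1, h2]
        ring


variable {N : ℕ} {I : Fin N → ℕ}

lemma tucker_tucker (X : (∀ k, Fin (I k)) → ℝ)
    (A C : ∀ n, Matrix (Fin (I n)) (Fin (I n)) ℝ) :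
    tucker (tucker X C) A = tucker X (fun n => A n * C n) := by
  funext i
  simp only [tucker, Finset.sum_mul, mul_assoc]
  rw [Finset.sum_comm]
  refine Finset.sum_congr rfl fun k _ => ?_
  rw [← Finset.mul_sum]
  congr 1
  have : ∀ j : ∀ n, Fin (I n), (∏ n, C n (j n) (k n)) * ∏ n, A n (i n) (j n)
      = ∏ n, A n (i n) (j n) * C n (j n) (k n) := by
    intro j; rw [← Finset.prod_mul_distrib]; exact Finset.prod_congr rfl fun n _ => mul_comm _ _
  simp only [this]
  have h2 := Finset.prod_univ_sum (κ := fun n => Fin (I n)) (fun _ => Finset.univ)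
    (fun n t => A n (i n) t * C n t (k n))
  rw [Fintype.piFinset_univ] at h2
  rw [← h2]
  exact Finset.prod_congr rfl fun n _ => (Matrix.mul_apply).symm

lemma tucker_one (X : (∀ k, Fin (I k)) → ℝ) :
    tucker X (fun _ => (1 : Matrix _ _ ℝ)) = X := by
  funext i
  simp only [tucker, Matrix.one_apply]
  have : ∀ j : ∀ n, Fin (I n), (∏ n, if i n = j n then (1:ℝ) else 0)
      = if i = j then 1 else 0 := by
    intro j
    rw [Finset.prod_boole]
    simp [funext_iff]
  simp only [this, mul_ite, mul_one, mul_zero]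
  simp


lemma exists_orthogonal {k : ℕ} {c : Type*} [Fintype c]
    (M : Matrix (Fin k) c ℝ) (σ : Fin k → ℝ) (e : Equiv.Perm (Fin k))
    (he : ∀ i, σ i ^ 2 =
      (Matrix.isHermitian_mul_conjTranspose_self M).eigenvalues (e i)) :
    ∃ U : Matrix (Fin k) (Fin k) ℝ, Uᵀ * U = 1 ∧ U * Uᵀ = 1 ∧
      ∀ α β, (∑ a, ∑ b, U a α * U b β * (M * Mᴴ) a b)
        = if α = β then σ α ^ 2 else 0 := by
  classical
  set hH := Matrix.isHermitian_mul_conjTranspose_self M with hHdef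
  set V : Matrix (Fin k) (Fin k) ℝ := (hH.eigenvectorUnitary : Matrix (Fin k) (Fin k) ℝ)
    with hVdef
  have hstar : star V = Vᵀ := by
    ext i j; simp [Matrix.star_apply]
  have hVV : V * Vᵀ = 1 := by
    rw [← hstar]; exact Matrix.mem_unitaryGroup_iff.mp hH.eigenvectorUnitary.2
  have hVV' : Vᵀ * V = 1 := by
    rw [← hstar]; exact Matrix.mem_unitaryGroup_iff'.mp hH.eigenvectorUnitary.2
  have hspec : Vᵀ * (M * Mᴴ) * V = Matrix.diagonal hH.eigenvalues := by
    have := hH.conjStarAlgAut_star_eigenvectorUnitary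
    rw [Unitary.conjStarAlgAut_star_apply, ← hVdef, hstar] at this
    simpa [RCLike.ofReal_real_eq_id] using this
  refine ⟨Matrix.of fun a i => V a (e i), ?_, ?_, ?_⟩
  · ext i i'
    have : (∑ a, V a (e i) * V a (e i')) = (Vᵀ * V) (e i) (e i') := by
      rw [Matrix.mul_apply]; rfl
    simp only [Matrix.mul_apply, Matrix.transpose_apply, Matrix.of_apply]
    rw [this, hVV']
    simp only [Matrix.one_apply, EmbeddingLike.apply_eq_iff_eq]
  · ext α β
    simp only [Matrix.mul_apply, Matrix.transpose_apply, Matrix.of_apply]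
    rw [Equiv.sum_comp e (fun t => V α t * V β t)]
    have : (∑ t, V α t * V β t) = (V * Vᵀ) α β := by
      rw [Matrix.mul_apply]; rfl
    rw [this, hVV]
  · intro α β
    simp only [Matrix.of_apply]
    have key : (∑ a, ∑ b, V a (e α) * V b (e β) * (M * Mᴴ) a b)
        = (Vᵀ * (M * Mᴴ) * V) (e α) (e β) := by
      simp only [Matrix.mul_apply, Matrix.transpose_apply, Finset.sum_mul,
        Finset.mul_sum]
      rw [Finset.sum_comm]
      exact Finset.sum_congr rfl fun a _ => Finset.sum_congr rfl fun b _ =>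
        Finset.sum_congr rfl fun x _ => by ring
    rw [key, hspec]
    simp only [Matrix.diagonal_apply, EmbeddingLike.apply_eq_iff_eq]
    by_cases h : α = β
    · subst h; simp [he α]
    · simp [h]

end HOSVDAux

/-- **HOSVD existence** (De Lathauwer–De Moor–Vandewalle, Theorem 2). -/
theorem hosvd_exists {N : ℕ} {I : Fin N → ℕ} (hI : ∀ n, 1 ≤ I n)
    (X : (∀ k, Fin (I k)) → ℝ) (σ : ∀ n, Fin (I n) → ℝ)
    (hσ : ∀ n, IsSingularValues (modeUnfold X n) (σ n)) :
    ∃ (U : ∀ n, Matrix (Fin (I n)) (Fin (I n)) ℝ) (S : (∀ k, Fin (I k)) → ℝ),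
      (∀ n, (U n)ᵀ * U n = 1) ∧
      X = tucker S U ∧
      (∀ (n : Fin N) (α β : Fin (I n)), α ≠ β →
        ∑ j, modeUnfold S n α j * modeUnfold S n β j = 0) ∧
      (∀ (n : Fin N) (α β : Fin (I n)), α ≤ β →
        Real.sqrt (∑ j, modeUnfold S n β j ^ 2) ≤
          Real.sqrt (∑ j, modeUnfold S n α j ^ 2)) ∧
      (∀ (n : Fin N) (i : Fin (I n)),
        Real.sqrt (∑ j, modeUnfold S n i j ^ 2) = σ n i) := by
  classical
  have hEx : ∀ n, ∃ U : Matrix (Fin (I n)) (Fin (I n)) ℝ,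
      Uᵀ * U = 1 ∧ U * Uᵀ = 1 ∧
      ∀ α β, (∑ a, ∑ b, U a α * U b β *
          (modeUnfold X n * (modeUnfold X n)ᴴ) a b)
        = if α = β then σ n α ^ 2 else 0 := by
    intro n
    obtain ⟨-, -, e, he⟩ := hσ n
    exact exists_orthogonal (modeUnfold X n) (σ n) e he
  choose U hU1 hU2 hU3 using hEx
  set S : (∀ k, Fin (I k)) → ℝ := tucker X (fun m => (U m)ᵀ) with hS
  have hGram : ∀ (n : Fin N) (α β : Fin (I n)),
      (∑ j, modeUnfold S n α j * modeUnfold S n β j)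
        = if α = β then σ n α ^ 2 else 0 := by
    intro n α β
    rw [hS, hosvd_gram X U hU2 n α β, ← hU3 n α β]
    refine Finset.sum_congr rfl fun a _ => Finset.sum_congr rfl fun b _ => ?_
    congr 1
  have hNorm : ∀ (n : Fin N) (i : Fin (I n)),
      (∑ j, modeUnfold S n i j ^ 2) = σ n i ^ 2 := by
    intro n i
    have := hGram n i i
    rw [if_pos rfl] at this
    rw [← this]
    exact Finset.sum_congr rfl fun j _ => by ring
  have hSqrt : ∀ (n : Fin N) (i : Fin (I n)),
      Real.sqrt (∑ j, modeUnfold S n i j ^ 2) = σ n i := by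
    intro n i
    rw [hNorm n i]
    exact Real.sqrt_sq ((hσ n).1 i)
  refine ⟨U, S, hU1, ?_, ?_, ?_, hSqrt⟩
  · rw [hS, tucker_tucker X U (fun m => (U m)ᵀ)]
    have : (fun n => U n * (U n)ᵀ) = fun _ : Fin N => (1 : Matrix _ _ ℝ) := by
      funext n; exact hU2 n
    rw [this, tucker_one]
  · intro n α β hne
    rw [hGram n α β, if_neg hne]
  · intro n α β hle
    rw [hSqrt n α, hSqrt n β]
    exact (hσ n).2.1 hle
end

section
/- Let X be an order-N real tensor of shape (I_1,…,I_N), r = (R_1,…,R_N) a core shape with 1 ≤ R_n ≤ I_n, and X̂ the r-truncated HOSVD reconstruction of X. Then L(X,r) ≤ ‖X − X̂‖_F² ≤ Σ_{i_1=R_1+1}^{I_1} (σ_{i_1}^(1))² + Σ_{i_2=R_2+1}^{I_2} (σ_{i_2}^(2))² + ⋯ + Σ_{i_N=R_N+1}^{I_N} (σ_{i_N}^(N))². -/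
open scoped BigOperators
open Matrix

section HosvdCharpolyAux
open Polynomial


theorem charpoly_conj_aux {n : Type*} [Fintype n] [DecidableEq n] {R : Type*} [CommRing R]
    (P B Q : Matrix n n R) (h : P * Q = 1) : (P * B * Q).charpoly = B.charpoly := by
  have hmap : (C : R →+* R[X]).mapMatrix P * (C : R →+* R[X]).mapMatrix Q = 1 := by
    rw [← _root_.map_mul, h, _root_.map_one]
  have hs : (C : R →+* R[X]).mapMatrix P * Matrix.scalar n (X : R[X]) *
      (C : R →+* R[X]).mapMatrix Q = Matrix.scalar n (X : R[X]) := by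
    rw [((Matrix.scalar_commute (X : R[X]) (fun r => Commute.all _ _)
      ((C : R →+* R[X]).mapMatrix P)).symm).eq, mul_assoc, hmap, mul_one]
  have hcm : charmatrix (P * B * Q) =
      (C : R →+* R[X]).mapMatrix P * charmatrix B * (C : R →+* R[X]).mapMatrix Q := by
    unfold charmatrix
    rw [mul_sub, sub_mul, _root_.map_mul, _root_.map_mul, hs]
  have hmap' : (C : R →+* R[X]).mapMatrix Q * (C : R →+* R[X]).mapMatrix P = 1 :=
    mul_eq_one_comm.mp hmap
  unfold Matrix.charpoly
  rw [hcm, det_mul, det_mul, mul_comm, ← mul_assoc, ← det_mul, hmap', det_one, one_mul]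

theorem charpoly_diagonal_aux {n : Type*} [Fintype n] [DecidableEq n] {R : Type*} [CommRing R]
    (d : n → R) : (Matrix.diagonal d).charpoly = ∏ i, (X - C (d i)) := by
  have : charmatrix (Matrix.diagonal d) = Matrix.diagonal fun i => (X : R[X]) - C (d i) := by
    ext i j
    by_cases hij : i = j
    · subst hij; simp
    · simp [charmatrix_apply_ne _ _ _ hij, Matrix.diagonal_apply_ne _ hij]
  rw [Matrix.charpoly, this, det_diagonal]

theorem multiset_eq_of_diag {k : ℕ} {A : Matrix (Fin k) (Fin k) ℝ} (hA : A.IsHermitian)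
    (P Q : Matrix (Fin k) (Fin k) ℝ) (hPQ : P * Q = 1) (d : Fin k → ℝ)
    (hd : A = P * Matrix.diagonal d * Q) :
    Multiset.map d Finset.univ.val = Multiset.map hA.eigenvalues Finset.univ.val := by
  have hspec := hA.spectral_theorem
  rw [RCLike.ofReal_real_eq_id] at hspec
  simp only [Function.id_comp] at hspec
  have hV : (hA.eigenvectorUnitary : Matrix (Fin k) (Fin k) ℝ) *
      star (hA.eigenvectorUnitary : Matrix (Fin k) (Fin k) ℝ) = 1 :=
    Matrix.mem_unitaryGroup_iff.mp hA.eigenvectorUnitary.2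
  have h1 : A.charpoly = ∏ i, (X - C (d i)) := by
    rw [hd, charpoly_conj_aux _ _ _ hPQ, charpoly_diagonal_aux]
  have h2 : A.charpoly = ∏ i, (X - C (hA.eigenvalues i)) := by
    have := charpoly_conj_aux (hA.eigenvectorUnitary : Matrix (Fin k) (Fin k) ℝ)
      (Matrix.diagonal hA.eigenvalues) (star (hA.eigenvectorUnitary : Matrix (Fin k) (Fin k) ℝ)) hV
    rw [Unitary.conjStarAlgAut_apply] at hspec
    rw [← hspec, charpoly_diagonal_aux] at this
    exact this
  have key : ∀ (f : Fin k → ℝ), ((Multiset.map f Finset.univ.val).map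
      fun a => X - C a).prod = ∏ i, (X - C (f i)) := by
    intro f
    rw [Multiset.map_map, Finset.prod_eq_multiset_prod]
    rfl
  have := (key d).trans (h1.symm.trans (h2.trans (key hA.eigenvalues).symm))
  have hr := congrArg Polynomial.roots this
  rwa [roots_multiset_prod_X_sub_C, roots_multiset_prod_X_sub_C] at hr

theorem antitone_eq_of_multiset_eq {k : ℕ} (f g : Fin k → ℝ) (hf : Antitone f) (hg : Antitone g)
    (h : Multiset.map f Finset.univ.val = Multiset.map g Finset.univ.val) : f = g := by
  have coe_eq : ∀ (f : Fin k → ℝ),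
      (↑(List.ofFn f) : Multiset ℝ) = Multiset.map f Finset.univ.val := by
    intro f; rw [List.ofFn_eq_map, Fin.univ_def]; rfl
  have hl : (List.ofFn f).Perm (List.ofFn g) := by
    rw [← Multiset.coe_eq_coe, coe_eq, coe_eq, h]
  apply List.ofFn_injective
  have : IsAntisymm ℝ (fun a b : ℝ => a ≥ b) := ⟨fun a b h1 h2 => le_antisymm h2 h1⟩
  refine List.Perm.eq_of_pairwise (le := fun a b : ℝ => a ≥ b)
    (fun a b _ _ h1 h2 => le_antisymm h2 h1) ?_ ?_ hl <;>
    · rw [List.pairwise_ofFn]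
      intro i j hij
      first
        | exact hf hij.le
        | exact hg hij.le

end HosvdCharpolyAux

namespace HosvdAux

variable {N : ℕ} {I : Fin N → ℕ}

@[simp] lemma fullIdx_same {n : Fin N} (i : Fin (I n))
    (j : ∀ m : {m : Fin N // m ≠ n}, Fin (I m.1)) : fullIdx n i j n = i := by
  simp [fullIdx]

lemma fullIdx_ne {n k : Fin N} (h : k ≠ n) (i : Fin (I n))
    (j : ∀ m : {m : Fin N // m ≠ n}, Fin (I m.1)) : fullIdx n i j k = j ⟨k, h⟩ := by
  simp [fullIdx, h]

/-- Split a pi index at mode `n`. -/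
def modeEquiv (n : Fin N) :
    (∀ k, Fin (I k)) ≃ Fin (I n) × (∀ m : {m : Fin N // m ≠ n}, Fin (I m.1)) where
  toFun f := (f n, fun m => f m.1)
  invFun p := fullIdx n p.1 p.2
  left_inv f := by
    funext k
    by_cases h : k = n
    · subst h; simp [fullIdx]
    · simp [fullIdx, h]
  right_inv p := by
    refine Prod.ext (by simp) ?_
    funext m
    exact fullIdx_ne m.2 p.1 p.2

lemma sum_fullIdx (n : Fin N) (F : (∀ k, Fin (I k)) → ℝ) :
    ∑ i, F i = ∑ α : Fin (I n), ∑ j : ∀ m : {m : Fin N // m ≠ n}, Fin (I m.1),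
      F (fullIdx n α j) := by
  rw [← Equiv.sum_comp (modeEquiv n).symm F, Fintype.sum_prod_type]
  rfl

lemma frobSq_nonneg (X : (∀ k, Fin (I k)) → ℝ) : 0 ≤ frobSq X :=
  Finset.sum_nonneg fun _ _ => sq_nonneg _

lemma prod_split {M : Type*} [CommMonoid M] (n : Fin N) (f : Fin N → M) :
    ∏ k, f k = f n * ∏ m : {m : Fin N // m ≠ n}, f m.1 := by
  rw [← Finset.mul_prod_erase Finset.univ f (Finset.mem_univ n)]
  congr 1
  exact Finset.prod_subtype _ (fun m => by simp [Finset.mem_erase]) f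

lemma delta_of_orth {k : ℕ} {U : Matrix (Fin k) (Fin k) ℝ} (hU : Uᵀ * U = 1)
    (a b : Fin k) : ∑ i, U i a * U i b = if a = b then 1 else 0 := by
  have := congrFun (congrFun hU a) b
  rw [Matrix.mul_apply] at this
  simp only [Matrix.transpose_apply] at this
  rw [this, Matrix.one_apply]

lemma frobSq_tucker_eq (G : (∀ k, Fin (I k)) → ℝ)
    (U : ∀ n, Matrix (Fin (I n)) (Fin (I n)) ℝ) (hU : ∀ n, (U n)ᵀ * U n = 1) :
    frobSq (tucker G U) = frobSq G := by
  unfold frobSq tucker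
  have expand : ∀ i : ∀ k, Fin (I k),
      (∑ j : ∀ k, Fin (I k), G j * ∏ n, U n (i n) (j n)) ^ 2 =
      ∑ j : ∀ k, Fin (I k), ∑ j' : ∀ k, Fin (I k),
        G j * G j' * ∏ n, (U n (i n) (j n) * U n (i n) (j' n)) := by
    intro i
    rw [sq, Finset.sum_mul_sum]
    refine Finset.sum_congr rfl fun j _ => Finset.sum_congr rfl fun j' _ => ?_
    rw [Finset.prod_mul_distrib]; ring
  simp only [expand]
  rw [Finset.sum_comm]
  have inner : ∀ j j' : ∀ k, Fin (I k),
      ∑ i : ∀ k, Fin (I k), G j * G j' * ∏ n, (U n (i n) (j n) * U n (i n) (j' n)) =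
      G j * G j' * (if j = j' then (1:ℝ) else 0) := by
    intro j j'
    rw [← Finset.mul_sum]
    congr 1
    rw [← Fintype.prod_sum fun n a => U n a (j n) * U n a (j' n)]
    have : ∀ n, (∑ a, U n a (j n) * U n a (j' n)) = if j n = j' n then (1:ℝ) else 0 :=
      fun n => delta_of_orth (hU n) _ _
    simp only [this]
    rw [Fintype.prod_boole]
    simp [funext_iff]
  calc ∑ j : ∀ k, Fin (I k), ∑ i : ∀ k, Fin (I k), ∑ j' : ∀ k, Fin (I k),
        G j * G j' * ∏ n, (U n (i n) (j n) * U n (i n) (j' n))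
      = ∑ j : ∀ k, Fin (I k), ∑ j' : ∀ k, Fin (I k), ∑ i : ∀ k, Fin (I k),
        G j * G j' * ∏ n, (U n (i n) (j n) * U n (i n) (j' n)) :=
        Finset.sum_congr rfl (fun j _ => Finset.sum_comm)
    _ = ∑ j : ∀ k, Fin (I k), ∑ j' : ∀ k, Fin (I k),
        G j * G j' * (if j = j' then (1:ℝ) else 0) := by simp only [inner]
    _ = ∑ j : ∀ k, Fin (I k), G j ^ 2 := by
        simp [mul_ite, mul_one, mul_zero, Finset.sum_ite_eq, sq]

lemma tucker_sub {R : Fin N → ℕ} (G G' : (∀ k, Fin (R k)) → ℝ)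
    (A : ∀ n, Matrix (Fin (I n)) (Fin (R n)) ℝ) :
    (fun i => tucker G A i - tucker G' A i) = tucker (fun j => G j - G' j) A := by
  funext i
  unfold tucker
  rw [← Finset.sum_sub_distrib]
  exact Finset.sum_congr rfl fun j _ => by ring

lemma union_bound (R : Fin N → ℕ) (f : (∀ k, Fin (I k)) → ℝ) (hf : ∀ i, 0 ≤ f i) :
    ∑ i ∈ Finset.univ.filter (fun i : ∀ k, Fin (I k) => ¬ ∀ n, (i n : ℕ) < R n), f i ≤
      ∑ n, ∑ i ∈ Finset.univ.filter (fun i : ∀ k, Fin (I k) => R n ≤ (i n : ℕ)), f i := by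
  simp only [Finset.sum_filter]
  rw [Finset.sum_comm]
  refine Finset.sum_le_sum fun i _ => ?_
  have hterm : ∀ n, 0 ≤ if R n ≤ (i n : ℕ) then f i else 0 := fun n => by
    split_ifs
    exacts [hf i, le_rfl]
  by_cases h : ∀ n, (i n : ℕ) < R n
  · rw [if_neg (not_not_intro h)]
    exact Finset.sum_nonneg fun n _ => hterm n
  · rw [if_pos h]
    push_neg at h
    obtain ⟨n0, hn0⟩ := h
    calc f i = if R n0 ≤ (i n0 : ℕ) then f i else 0 := (if_pos hn0).symm
      _ ≤ ∑ n, if R n ≤ (i n : ℕ) then f i else 0 :=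
        Finset.single_le_sum (f := fun n => if R n ≤ (i n : ℕ) then f i else 0)
          (fun n _ => hterm n) (Finset.mem_univ n0)

lemma slice_sum (n : Fin N) (S : (∀ k, Fin (I k)) → ℝ) (p : Fin (I n) → Prop)
    [DecidablePred p] :
    ∑ i ∈ Finset.univ.filter (fun i : ∀ k, Fin (I k) => p (i n)), S i ^ 2 =
      ∑ α ∈ Finset.univ.filter p, ∑ j, modeUnfold S n α j ^ 2 := by
  simp only [Finset.sum_filter]
  rw [sum_fullIdx n (fun i => if p (i n) then S i ^ 2 else 0)]
  refine Finset.sum_congr rfl fun α _ => ?_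
  simp only [fullIdx_same]
  split_ifs with h
  · rfl
  · simp

/-- The Kronecker-style matrix of the non-`n` factors. -/
noncomputable def Wmat (U : ∀ n, Matrix (Fin (I n)) (Fin (I n)) ℝ) (n : Fin N) :
    Matrix (∀ m : {m : Fin N // m ≠ n}, Fin (I m.1))
      (∀ m : {m : Fin N // m ≠ n}, Fin (I m.1)) ℝ :=
  fun j' j => ∏ m, U m.1 (j' m) (j m)

lemma unfold_tucker (S : (∀ k, Fin (I k)) → ℝ)
    (U : ∀ n, Matrix (Fin (I n)) (Fin (I n)) ℝ) (n : Fin N) :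
    modeUnfold (tucker S U) n = U n * (modeUnfold S n * (Wmat U n)ᵀ) := by
  ext i j'
  show tucker S U (fullIdx n i j') = _
  unfold tucker
  rw [sum_fullIdx n (fun j => S j * ∏ k, U k (fullIdx n i j' k) (j k))]
  rw [Matrix.mul_apply]
  refine Finset.sum_congr rfl fun a _ => ?_
  rw [Matrix.mul_apply, Finset.mul_sum]
  refine Finset.sum_congr rfl fun jr _ => ?_
  rw [prod_split n]
  simp only [fullIdx_same]
  have hprod : ∏ m : {m : Fin N // m ≠ n}, U m.1 (fullIdx n i j' m.1) (fullIdx n a jr m.1) =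
      ∏ m : {m : Fin N // m ≠ n}, U m.1 (j' m) (jr m) :=
    Finset.prod_congr rfl fun m _ => by rw [fullIdx_ne m.2, fullIdx_ne m.2]
  rw [hprod]
  show S (fullIdx n a jr) * (U n i a * Wmat U n j' jr) =
    U n i a * (modeUnfold S n a jr * (Wmat U n)ᵀ jr j')
  rw [Matrix.transpose_apply]
  show S (fullIdx n a jr) * (U n i a * Wmat U n j' jr) =
    U n i a * (S (fullIdx n a jr) * Wmat U n j' jr)
  ring

lemma Wmat_orth (U : ∀ n, Matrix (Fin (I n)) (Fin (I n)) ℝ)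
    (hU : ∀ n, (U n)ᵀ * U n = 1) (n : Fin N) : (Wmat U n)ᵀ * Wmat U n = 1 := by
  ext j j'
  rw [Matrix.mul_apply]
  simp only [Matrix.transpose_apply]
  have : ∀ j'' : ∀ m : {m : Fin N // m ≠ n}, Fin (I m.1),
      Wmat U n j'' j * Wmat U n j'' j' =
      ∏ m : {m : Fin N // m ≠ n}, (U m.1 (j'' m) (j m) * U m.1 (j'' m) (j' m)) := by
    intro j''
    unfold Wmat
    rw [Finset.prod_mul_distrib]
  simp only [this]
  rw [← Fintype.prod_sum fun (m : {m : Fin N // m ≠ n}) b => U m.1 b (j m) * U m.1 b (j' m)]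
  have hd : ∀ m : {m : Fin N // m ≠ n}, (∑ b, U m.1 b (j m) * U m.1 b (j' m)) =
      if j m = j' m then (1:ℝ) else 0 := fun m => delta_of_orth (hU m.1) _ _
  simp only [hd]
  rw [Fintype.prod_boole, Matrix.one_apply]
  simp [funext_iff]

lemma gram_eq (S : (∀ k, Fin (I k)) → ℝ) (U : ∀ n, Matrix (Fin (I n)) (Fin (I n)) ℝ)
    (hU : ∀ n, (U n)ᵀ * U n = 1)
    (horth : ∀ (n : Fin N) (α β : Fin (I n)), α ≠ β →
      ∑ j, modeUnfold S n α j * modeUnfold S n β j = 0) (n : Fin N) :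
    modeUnfold (tucker S U) n * (modeUnfold (tucker S U) n)ᴴ =
      U n * Matrix.diagonal (fun α => ∑ j, modeUnfold S n α j ^ 2) * (U n)ᵀ := by
  rw [Matrix.conjTranspose_eq_transpose_of_trivial, unfold_tucker S U n]
  have hSS : modeUnfold S n * (Wmat U n)ᵀ * (modeUnfold S n * (Wmat U n)ᵀ)ᵀ =
      Matrix.diagonal (fun α => ∑ j, modeUnfold S n α j ^ 2) := by
    rw [Matrix.transpose_mul, Matrix.transpose_transpose, Matrix.mul_assoc,
      ← Matrix.mul_assoc (Wmat U n)ᵀ, Wmat_orth U hU n, Matrix.one_mul]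
    ext α β
    rw [Matrix.mul_apply]
    by_cases hab : α = β
    · subst hab
      rw [Matrix.diagonal_apply_eq]
      exact Finset.sum_congr rfl fun j _ => by rw [Matrix.transpose_apply, sq]
    · rw [Matrix.diagonal_apply_ne _ hab]
      simpa only [Matrix.transpose_apply] using horth n α β hab
  calc U n * (modeUnfold S n * (Wmat U n)ᵀ) * (U n * (modeUnfold S n * (Wmat U n)ᵀ))ᵀ
      = U n * (modeUnfold S n * (Wmat U n)ᵀ * (modeUnfold S n * (Wmat U n)ᵀ)ᵀ) * (U n)ᵀ := by
        rw [Matrix.transpose_mul]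
        simp only [Matrix.mul_assoc]
    _ = U n * Matrix.diagonal (fun α => ∑ j, modeUnfold S n α j ^ 2) * (U n)ᵀ := by
        rw [hSS, Matrix.mul_assoc]


lemma sigma_sq_eq {X S : (∀ k, Fin (I k)) → ℝ}
    (U : ∀ n, Matrix (Fin (I n)) (Fin (I n)) ℝ) (hU : ∀ n, (U n)ᵀ * U n = 1)
    (hX : X = tucker S U)
    (horth : ∀ (n : Fin N) (α β : Fin (I n)), α ≠ β →
      ∑ j, modeUnfold S n α j * modeUnfold S n β j = 0)
    (hord : ∀ (n : Fin N) (α β : Fin (I n)), α ≤ β →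
      Real.sqrt (∑ j, modeUnfold S n β j ^ 2) ≤ Real.sqrt (∑ j, modeUnfold S n α j ^ 2))
    (σ : ∀ n, Fin (I n) → ℝ) (hσ : ∀ n, IsSingularValues (modeUnfold X n) (σ n))
    (n : Fin N) (α : Fin (I n)) : σ n α ^ 2 = ∑ j, modeUnfold S n α j ^ 2 := by
  set d : Fin (I n) → ℝ := fun α => ∑ j, modeUnfold S n α j ^ 2 with hdd
  have hdnn : ∀ α, 0 ≤ d α := fun α => Finset.sum_nonneg fun _ _ => sq_nonneg _
  have hA := Matrix.isHermitian_mul_conjTranspose_self (modeUnfold X n)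
  have hgram : modeUnfold X n * (modeUnfold X n)ᴴ =
      U n * Matrix.diagonal d * (U n)ᵀ := by
    rw [hX]; exact gram_eq S U hU horth n
  have hPQ : U n * (U n)ᵀ = 1 := mul_eq_one_comm.mp (hU n)
  have hmult := multiset_eq_of_diag hA (U n) ((U n)ᵀ) hPQ d hgram
  obtain ⟨hnn, hant, e, he⟩ := hσ n
  have hperm : Finset.univ.val.map e = Finset.univ.val := by
    have h1 := congrArg Finset.val (Finset.map_univ_equiv e)
    simpa using h1
  have hmult2 : Multiset.map (fun i => σ n i ^ 2) Finset.univ.val =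
      Multiset.map d Finset.univ.val := by
    calc Multiset.map (fun i => σ n i ^ 2) Finset.univ.val
        = Multiset.map (fun i => hA.eigenvalues (e i)) Finset.univ.val :=
          Multiset.map_congr rfl fun i _ => he i
      _ = Multiset.map hA.eigenvalues (Finset.univ.val.map e) := by
          rw [Multiset.map_map]; rfl
      _ = Multiset.map hA.eigenvalues Finset.univ.val := by rw [hperm]
      _ = Multiset.map d Finset.univ.val := hmult.symm
  have hss : Antitone (fun i => σ n i ^ 2) := fun a b hab =>
    pow_le_pow_left₀ (hnn b) (hant hab) 2
  have hda : Antitone d := by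
    intro a b hab
    have h1 := hord n a b hab
    calc d b = Real.sqrt (d b) ^ 2 := (Real.sq_sqrt (hdnn b)).symm
      _ ≤ Real.sqrt (d a) ^ 2 := pow_le_pow_left₀ (Real.sqrt_nonneg _) h1 2
      _ = d a := Real.sq_sqrt (hdnn a)
  exact congrFun (antitone_eq_of_multiset_eq _ _ hss hda hmult2) α

end HosvdAux

/-- **Upper bound for the reconstruction error of the truncated HOSVD**:
`L(X, R) ≤ ‖X − X̂‖_F² ≤ Σ_n Σ_{i > R_n} (σ_i⁽ⁿ⁾)²`. -/
theorem hosvd_reconstruction_upper_bound {N : ℕ} {I : Fin N → ℕ} (hI : ∀ n, 1 ≤ I n)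
    (X S : (∀ k, Fin (I k)) → ℝ) (U : ∀ n, Matrix (Fin (I n)) (Fin (I n)) ℝ)
    (hU : ∀ n, (U n)ᵀ * U n = 1)
    (hX : X = tucker S U)
    (horth : ∀ (n : Fin N) (α β : Fin (I n)), α ≠ β →
      ∑ j, modeUnfold S n α j * modeUnfold S n β j = 0)
    (hord : ∀ (n : Fin N) (α β : Fin (I n)), α ≤ β →
      Real.sqrt (∑ j, modeUnfold S n β j ^ 2) ≤
        Real.sqrt (∑ j, modeUnfold S n α j ^ 2))
    (σ : ∀ n, Fin (I n) → ℝ) (hσ : ∀ n, IsSingularValues (modeUnfold X n) (σ n))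
    (R : Fin N → ℕ) (hR : ∀ n, 1 ≤ R n ∧ R n ≤ I n)
    (Xhat : (∀ k, Fin (I k)) → ℝ) (hXhat : Xhat = tucker (truncate S R) U) :
    tuckerLoss I X R ≤ frobSq (fun i => X i - Xhat i) ∧
      frobSq (fun i => X i - Xhat i) ≤ surrLoss σ R := by
  constructor
  · -- `L(X,R) ≤ ‖X - X̂‖²`
    have hbdd : BddBelow {v : ℝ | ∃ (G : (∀ k, Fin (R k)) → ℝ)
        (A : ∀ n, Matrix (Fin (I n)) (Fin (R n)) ℝ),
        v = frobSq (fun i => X i - tucker G A i)} := by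
      refine ⟨0, ?_⟩
      rintro v ⟨G, A, rfl⟩
      exact HosvdAux.frobSq_nonneg _
    set G : (∀ k, Fin (R k)) → ℝ := fun j => S (fun k => Fin.castLE (hR k).2 (j k)) with hG
    set A : ∀ n, Matrix (Fin (I n)) (Fin (R n)) ℝ :=
      fun n => Matrix.of fun i r => U n i (Fin.castLE (hR n).2 r) with hA
    have hXA : Xhat = tucker G A := by
      funext i
      rw [hXhat]
      show (∑ j : ∀ k, Fin (I k), truncate S R j * ∏ n, U n (i n) (j n)) =
        ∑ j : ∀ k, Fin (R k), G j * ∏ n, A n (i n) (j n)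
      have step1 : (∑ j : ∀ k, Fin (I k), truncate S R j * ∏ n, U n (i n) (j n)) =
          ∑ j ∈ Finset.univ.filter (fun j : ∀ k, Fin (I k) => ∀ n, (j n : ℕ) < R n),
            S j * ∏ n, U n (i n) (j n) := by
        rw [Finset.sum_filter]
        refine (Finset.sum_congr rfl fun j _ => ?_)
        unfold truncate
        split_ifs with h <;> simp
      rw [step1]
      refine (Finset.sum_nbij'
        (fun (j : ∀ k, Fin (R k)) => (fun k => Fin.castLE (hR k).2 (j k) : ∀ k, Fin (I k)))
        (fun (j : ∀ k, Fin (I k)) => (fun k =>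
          if h : (j k : ℕ) < R k then (⟨(j k : ℕ), h⟩ : Fin (R k)) else ⟨0, (hR k).1⟩))
        ?_ ?_ ?_ ?_ ?_).symm
      · intro a _
        simp only [Finset.mem_filter, Finset.mem_univ, true_and]
        intro n
        exact (a n).isLt
      · intro b _
        exact Finset.mem_univ _
      · intro a _
        funext k
        have h : ((Fin.castLE (hR k).2 (a k) : Fin (I k)) : ℕ) < R k := (a k).isLt
        simp only [h, dif_pos]
        exact Fin.ext rfl
      · intro b hb
        have hb' : ∀ n, (b n : ℕ) < R n := (Finset.mem_filter.mp hb).2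
        funext k
        simp only [hb' k, dif_pos]
        exact Fin.ext rfl
      · intro a _
        rfl
    refine csInf_le hbdd ⟨G, A, ?_⟩
    rw [← hXA]
  · -- `‖X - X̂‖² ≤ surrLoss σ R`
    have hXmXhat : (fun i => X i - Xhat i) =
        tucker (fun j => S j - truncate S R j) U := by
      rw [hX, hXhat]
      exact HosvdAux.tucker_sub S (truncate S R) U
    rw [hXmXhat, HosvdAux.frobSq_tucker_eq _ U hU]
    have h3 : frobSq (fun j => S j - truncate S R j) =
        ∑ i ∈ Finset.univ.filter
          (fun i : ∀ k, Fin (I k) => ¬ ∀ n, (i n : ℕ) < R n), S i ^ 2 := by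
      unfold frobSq truncate
      rw [Finset.sum_filter]
      refine Finset.sum_congr rfl fun i _ => ?_
      by_cases h : ∀ n, (i n : ℕ) < R n
      · simp [h]
      · simp [h]
    rw [h3]
    refine le_trans (HosvdAux.union_bound R (fun i => S i ^ 2) (fun i => sq_nonneg _)) ?_
    refine le_of_eq (Finset.sum_congr rfl fun n _ => ?_)
    rw [HosvdAux.slice_sum n S (fun α => R n ≤ (α : ℕ))]
    exact (Finset.sum_congr rfl fun α _ =>
      (HosvdAux.sigma_sq_eq U hU hX horth hord σ hσ n α)).symm
end

section
/- (Correctness of the reduction from EQUIPARTITION to Tucker packing.) Let T ≥ 2 be an even integer, let w_1,…,w_T ≥ 2 be integers, let M = Σ_{n=1}^T w_n, and let N ≥ T be an integer with 2^{N−T/2} > 4(N−T) + 3M/2. Construct the Tucker packing instance: for n ∈ [T], set I_n = w_n, a_1^(n) = 2M, a_2^(n) = M + w_n, and a_i^(n) = 0 for 3 ≤ i ≤ I_n; for n ∈ [N]\[T], set I_n = 2 and a_1^(n) = a_2^(n) = 2M; and set the budget c = 2^{N−T/2} + 4(N−T) + 3M/2. Then there exists a core shape r ∈ [I_1]×⋯×[I_N]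 with ∏_{n=1}^N R_n + Σ_{n=1}^N I_n R_n ≤ c and Σ_{n=1}^N Σ_{i=1}^{R_n} a_i^(n) ≥ M(4N − 3T/2) + M/2 if and only if there exists a subset S ⊆ [T] with |S| = T/2 and Σ_{n∈S} w_n = M/2. -/
open scoped BigOperators

/-- Tucker packing objective `f(R) = Σ_{n=1}^N Σ_{i=1}^{R_n} a_i⁽ⁿ⁾`
(sequences are indexed starting at `1`). -/
noncomputable def fObj {N : ℕ} (a : Fin N → ℕ → ℝ) (R : Fin N → ℕ) : ℝ :=
  ∑ n, ∑ i ∈ Finset.Icc 1 (R n), a n i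

set_option maxHeartbeats 1000000

/-- **Correctness of the reduction from EQUIPARTITION to Tucker packing**: the
constructed Tucker packing instance admits a feasible core shape of objective value
at least `M(4N − 3T/2) + M/2` iff the weights `w_1, …, w_T` admit an equipartition. -/
theorem equipartition_reduction (T N : ℕ) (hT : 2 ≤ T) (hTe : Even T) (hTN : T ≤ N)
    (w : Fin T → ℕ) (hw : ∀ n, 2 ≤ w n)
    (M : ℕ) (hM : M = ∑ n, w n)
    (hbig : 4 * ((N : ℝ) - T) + 3 * M / 2 < 2 ^ (N - T / 2))
    (I : Fin N → ℕ)
    (hIdef : ∀ n : Fin N, I n = if h : (n : ℕ) < T then w ⟨n, h⟩ else 2)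
    (a : Fin N → ℕ → ℝ)
    (ha : ∀ (n : Fin N) (i : ℕ), a n i =
      if h : (n : ℕ) < T then
        (if i = 1 then (2 * M : ℝ) else if i = 2 then (M : ℝ) + w ⟨n, h⟩ else 0)
      else (if i = 1 ∨ i = 2 then (2 * M : ℝ) else 0))
    (c : ℝ) (hc : c = 2 ^ (N - T / 2) + 4 * ((N : ℝ) - T) + 3 * M / 2) :
    (∃ R : Fin N → ℕ, (∀ n, 1 ≤ R n ∧ R n ≤ I n) ∧
        ((∏ n, R n : ℕ) : ℝ) + ((∑ n, I n * R n : ℕ) : ℝ) ≤ c ∧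
        (M : ℝ) * (4 * N - 3 * T / 2) + M / 2 ≤ fObj a R) ↔
      (∃ S : Finset (Fin T), S.card = T / 2 ∧
        (∑ n ∈ S, (w n : ℝ)) = M / 2) := by
  classical
  obtain ⟨t, hTt⟩ := hTe
  have ht2 : T / 2 = t := by omega
  have htN : t ≤ N := by omega
  have heq : N - T / 2 = N - t := by omega
  have hM2 : 2 ≤ M := by
    calc 2 ≤ w ⟨0, by omega⟩ := hw _
      _ ≤ ∑ n, w n := Finset.single_le_sum (fun i _ => Nat.zero_le _) (Finset.mem_univ _)
      _ = M := hM.symm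
  have hMr : (0:ℝ) < M := by exact_mod_cast Nat.lt_of_lt_of_le (by norm_num) hM2
  have hTr : (T:ℝ) = 2 * t := by
    have : (T:ℝ) = (t:ℝ) + t := by exact_mod_cast hTt
    linarith
  have her : ((N - T/2 : ℕ) : ℝ) = (N:ℝ) - t := by
    rw [heq, Nat.cast_sub htN]
  have hMsum : (M:ℝ) = ∑ m, (w m : ℝ) := by rw [hM]; push_cast; rfl
  set B : Finset (Fin N) := Finset.univ.filter (fun n => ¬ (n:ℕ) < T) with hBdef
  have hmem : ∀ m : Fin T, ((Fin.castLE hTN m : Fin N) : ℕ) < T := fun m => by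
    simpa using m.isLt
  have hA : Finset.univ.filter (fun n : Fin N => (n:ℕ) < T)
      = Finset.univ.map ⟨Fin.castLE hTN, Fin.castLE_injective hTN⟩ := by
    ext n
    simp only [Finset.mem_filter, Finset.mem_univ, true_and, Finset.mem_map,
      Function.Embedding.coeFn_mk]
    constructor
    · intro h; exact ⟨⟨n, h⟩, rfl⟩
    · rintro ⟨m, rfl⟩; simpa using m.isLt
  have hcardB : B.card = N - T := by
    have h1 := Finset.card_filter_add_card_filter_not
      (s := (Finset.univ : Finset (Fin N))) (p := fun n => (n:ℕ) < T)
    rw [hA, ← hBdef] at h1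
    simp only [Finset.card_map, Finset.card_univ, Fintype.card_fin] at h1
    omega
  have hBmem : ∀ n ∈ B, ¬ (n:ℕ) < T := by
    intro n hn; rw [hBdef, Finset.mem_filter] at hn; exact hn.2
  have hsplit : ∀ f : Fin N → ℝ,
      ∑ n, f n = (∑ m, f (Fin.castLE hTN m)) + ∑ n ∈ B, f n := by
    intro f
    rw [← Finset.sum_filter_add_sum_filter_not Finset.univ (fun n : Fin N => (n:ℕ) < T) f,
      hA, Finset.sum_map]
    rfl
  have hsplitP : ∀ f : Fin N → ℕ,
      ∏ n, f n = (∏ m, f (Fin.castLE hTN m)) * ∏ n ∈ B, f n := by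
    intro f
    rw [← Finset.prod_filter_mul_prod_filter_not Finset.univ (fun n : Fin N => (n:ℕ) < T) f,
      hA, Finset.prod_map]
    rfl
  have hmk : ∀ (m : Fin T) (h : ((Fin.castLE hTN m : Fin N):ℕ) < T),
      (⟨((Fin.castLE hTN m : Fin N):ℕ), h⟩ : Fin T) = m := fun m h => by
    ext; simp
  have hIT : ∀ m : Fin T, I (Fin.castLE hTN m) = w m := by
    intro m; rw [hIdef, dif_pos (hmem m), hmk]
  have hIB : ∀ n ∈ B, I n = 2 := fun n hn => by
    rw [hIdef, dif_neg (hBmem n hn)]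
  have ha1T : ∀ m : Fin T, a (Fin.castLE hTN m) 1 = 2 * M := by
    intro m; rw [ha, dif_pos (hmem m)]; norm_num
  have ha2T : ∀ m : Fin T, a (Fin.castLE hTN m) 2 = M + w m := by
    intro m; rw [ha, dif_pos (hmem m), hmk]; norm_num
  have ha1B : ∀ n ∈ B, a n 1 = 2 * M := fun n hn => by
    rw [ha, dif_neg (hBmem n hn)]; norm_num
  have ha2B : ∀ n ∈ B, a n 2 = 2 * M := fun n hn => by
    rw [ha, dif_neg (hBmem n hn)]; norm_num
  have ha0 : ∀ (n : Fin N) (i : ℕ), 3 ≤ i → a n i = 0 := by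
    intro n i hi
    have h1 : i ≠ 1 := by omega
    have h2 : i ≠ 2 := by omega
    rw [ha]; split <;> simp [h1, h2]
  have hsum_a : ∀ (n : Fin N) (r : ℕ), 1 ≤ r →
      ∑ i ∈ Finset.Icc 1 r, a n i = a n 1 + if 2 ≤ r then a n 2 else 0 := by
    intro n r hr
    rcases Nat.lt_or_ge r 2 with h2 | h2
    · have hr1 : r = 1 := by omega
      subst hr1
      simp
    · rw [if_pos h2, ← Finset.sum_subset (Finset.Icc_subset_Icc_right h2)
        (fun i hi hni => ha0 n i (by
          simp only [Finset.mem_Icc] at hi hni; omega))]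
      have h12 : Finset.Icc 1 2 = {1, 2} := rfl
      rw [h12, Finset.sum_pair (by norm_num)]
  have hobj : ∀ R : Fin N → ℕ, (∀ n, 1 ≤ R n) →
      fObj a R = ∑ n, (a n 1 + if 2 ≤ R n then a n 2 else 0) :=
    fun R hR => Finset.sum_congr rfl fun n _ => hsum_a n (R n) (hR n)
  constructor
  · rintro ⟨R, hR, hbudget, hval⟩
    set S : Finset (Fin T) := Finset.univ.filter (fun m => 2 ≤ R (Fin.castLE hTN m)) with hSdef
    set BS : Finset (Fin N) := B.filter (fun n => 2 ≤ R n) with hBSdef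
    set k := S.card with hk
    set j := BS.card with hj
    set s : ℝ := ∑ m ∈ S, (w m : ℝ) with hs
    have hjNT : j ≤ N - T := by
      calc j ≤ B.card := Finset.card_le_card (Finset.filter_subset _ _)
        _ = N - T := hcardB
    have hs_nonneg : (0:ℝ) ≤ s := Finset.sum_nonneg fun m _ => by positivity
    have hsM : s ≤ (M:ℝ) := by
      rw [hMsum]
      exact Finset.sum_le_sum_of_subset_of_nonneg (Finset.subset_univ S)
        (fun i _ _ => by positivity)
    have hjr : (j:ℝ) ≤ (N:ℝ) - 2*t := by
      have h1 : (j:ℝ) ≤ ((N - T : ℕ):ℝ) := Nat.cast_le.mpr hjNT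
      rw [Nat.cast_sub hTN, hTr] at h1
      exact h1
    -- product lower bound
    have hPT : (∏ m : Fin T, if 2 ≤ R (Fin.castLE hTN m) then 2 else 1) = 2 ^ k := by
      rw [← Finset.prod_filter, ← hSdef, Finset.prod_const]
    have hPB : (∏ n ∈ B, if 2 ≤ R n then 2 else 1) = 2 ^ j := by
      rw [← Finset.prod_filter, ← hBSdef, Finset.prod_const]
    have hprodlb : (2:ℝ) ^ (k + j) ≤ ((∏ n, R n : ℕ) : ℝ) := by
      have hle : (∏ n, if 2 ≤ R n then 2 else 1) ≤ ∏ n, R n :=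
        Finset.prod_le_prod' fun n _ => by
          have := (hR n).1; split <;> omega
      have hnat : (2:ℕ) ^ (k + j) ≤ ∏ n, R n := by
        calc (2:ℕ)^(k+j) = 2^k * 2^j := pow_add 2 k j
          _ = ∏ n, if 2 ≤ R n then 2 else 1 := by
            rw [← hPT, ← hPB, ← hsplitP (fun n => if 2 ≤ R n then 2 else 1)]
          _ ≤ ∏ n, R n := hle
      exact_mod_cast hnat
    -- budget sum lower bound
    have hQlb : (M:ℝ) + s + 2*((N:ℝ) - T) + 2*j ≤ ((∑ n, I n * R n : ℕ) : ℝ) := by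
      push_cast
      rw [hsplit (fun n => (I n : ℝ) * R n)]
      have h1 : (M:ℝ) + s ≤ ∑ m, ((I (Fin.castLE hTN m) : ℝ) * R (Fin.castLE hTN m)) := by
        have heq1 : (M:ℝ) + s = ∑ m, ((w m:ℝ) + if m ∈ S then (w m:ℝ) else 0) := by
          rw [Finset.sum_add_distrib, ← hMsum, Finset.sum_ite_mem, Finset.univ_inter]
        rw [heq1]
        refine Finset.sum_le_sum fun m _ => ?_
        rw [hIT]
        by_cases hm : m ∈ S
        · have h2m : 2 ≤ R (Fin.castLE hTN m) := by
            rw [hSdef, Finset.mem_filter] at hm; exact hm.2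
          have h2r : (2:ℝ) ≤ R (Fin.castLE hTN m) := by exact_mod_cast h2m
          have hwr : (0:ℝ) ≤ (w m : ℝ) := by positivity
          rw [if_pos hm]
          nlinarith
        · have h1m : 1 ≤ R (Fin.castLE hTN m) := (hR _).1
          have h1r : (1:ℝ) ≤ R (Fin.castLE hTN m) := by exact_mod_cast h1m
          have hwr : (0:ℝ) ≤ (w m : ℝ) := by positivity
          rw [if_neg hm]
          nlinarith
      have h2 : 2*((N:ℝ) - T) + 2*j ≤ ∑ n ∈ B, ((I n:ℝ) * R n) := by
        have heq2 : 2*((N:ℝ) - T) + 2*(j:ℝ) = ∑ n ∈ B, ((2:ℝ) + if 2 ≤ R n then (2:ℝ) else 0) := by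
          rw [Finset.sum_add_distrib, Finset.sum_const, ← Finset.sum_filter, ← hBSdef,
            Finset.sum_const, hcardB, nsmul_eq_mul, nsmul_eq_mul, Nat.cast_sub hTN]
          ring
        rw [heq2]
        refine Finset.sum_le_sum fun n hn => ?_
        rw [hIB n hn]
        push_cast
        by_cases h2n : 2 ≤ R n
        · have h2r : (2:ℝ) ≤ R n := by exact_mod_cast h2n
          rw [if_pos h2n]; linarith
        · have h1r : (1:ℝ) ≤ R n := by exact_mod_cast (hR n).1
          rw [if_neg h2n]; linarith
      linarith
    -- objective value
    have hobjval : fObj a R = 2*(M:ℝ)*N + ((M:ℝ)*k + s) + 2*(M:ℝ)*j := by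
      rw [hobj R (fun n => (hR n).1), hsplit]
      have h1 : ∑ m, (a (Fin.castLE hTN m) 1 +
          if 2 ≤ R (Fin.castLE hTN m) then a (Fin.castLE hTN m) 2 else 0)
          = 2*(M:ℝ)*T + ((M:ℝ)*k + s) := by
        have hterm : ∀ m : Fin T, a (Fin.castLE hTN m) 1 +
            (if 2 ≤ R (Fin.castLE hTN m) then a (Fin.castLE hTN m) 2 else 0)
            = 2*(M:ℝ) + (if 2 ≤ R (Fin.castLE hTN m) then (M:ℝ) + w m else 0) := by
          intro m; rw [ha1T, ha2T]
        rw [Finset.sum_congr rfl fun m _ => hterm m, Finset.sum_add_distrib,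
          Finset.sum_const, ← Finset.sum_filter, ← hSdef, Finset.sum_add_distrib,
          Finset.sum_const]
        simp only [Finset.card_univ, Fintype.card_fin, nsmul_eq_mul, ← hk, ← hs]
        ring
      have h2 : ∑ n ∈ B, (a n 1 + if 2 ≤ R n then a n 2 else 0)
          = 2*(M:ℝ)*((N:ℝ) - T) + 2*(M:ℝ)*j := by
        have hterm : ∀ n ∈ B, a n 1 + (if 2 ≤ R n then a n 2 else 0)
            = 2*(M:ℝ) + (if 2 ≤ R n then 2*(M:ℝ) else 0) := by
          intro n hn; rw [ha1B n hn, ha2B n hn]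
        rw [Finset.sum_congr rfl hterm, Finset.sum_add_distrib, Finset.sum_const,
          ← Finset.sum_filter, ← hBSdef, Finset.sum_const, hcardB, nsmul_eq_mul,
          nsmul_eq_mul, Nat.cast_sub hTN]
        ring
      rw [h1, h2]
      ring
    have hval' : (M:ℝ) * (4*N - 3*(2*(t:ℝ))/2) + M/2 ≤ 2*(M:ℝ)*N + ((M:ℝ)*k + s) + 2*(M:ℝ)*j := by
      rw [← hTr, ← hobjval]; exact hval
    have hQnn : (0:ℝ) ≤ ((∑ n, I n * R n : ℕ) : ℝ) := Nat.cast_nonneg _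
    have hPc : ((∏ n, R n : ℕ) : ℝ) ≤ c := by linarith
    -- step 1 : k + j ≤ N - t
    have hkje : k + j ≤ N - t := by
      by_contra hcon
      push_neg at hcon
      have h1 : (2:ℝ) ^ (N - t + 1) ≤ (2:ℝ) ^ (k + j) :=
        pow_le_pow_right₀ one_le_two hcon
      rw [pow_succ] at h1
      rw [hc, heq] at hPc
      rw [heq] at hbig
      linarith
    -- step 2 : k + j = N - t
    have hkj : k + j = N - t := by
      rcases eq_or_lt_of_le hkje with h | h
      · exact h
      · exfalso
        have hcast : (k:ℝ) + j + 1 ≤ (N:ℝ) - t := by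
          have h1 : ((k + j + 1 : ℕ):ℝ) ≤ ((N - t : ℕ):ℝ) := Nat.cast_le.mpr (by omega)
          rw [Nat.cast_sub htN] at h1
          push_cast at h1
          linarith
        have p1 : (0:ℝ) ≤ (M:ℝ) * (((N:ℝ) - t - 1) - ((k:ℝ)+(j:ℝ))) :=
          mul_nonneg hMr.le (by linarith)
        have p2 : (0:ℝ) ≤ (M:ℝ) * (((N:ℝ) - 2*t) - j) :=
          mul_nonneg hMr.le (by linarith)
        nlinarith [hval', hsM, hMr, p1, p2]
    -- step 3 : j = N - T and k = t
    have hjNTeq : j = N - T := by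
      rcases eq_or_lt_of_le hjNT with h | h
      · exact h
      · exfalso
        have hkjr : (k:ℝ) + j = (N:ℝ) - t := by
          have h1 : ((k + j : ℕ):ℝ) = ((N - t : ℕ):ℝ) := by rw [hkj]
          rw [Nat.cast_sub htN] at h1
          push_cast at h1
          linarith
        have hcast : (j:ℝ) + 1 ≤ (N:ℝ) - 2*t := by
          have h1 : ((j + 1 : ℕ):ℝ) ≤ ((N - T : ℕ):ℝ) := Nat.cast_le.mpr (by omega)
          rw [Nat.cast_sub hTN, hTr] at h1
          push_cast at h1
          linarith
        have pk : (M:ℝ)*((k:ℝ)+j) = (M:ℝ)*((N:ℝ)-t) := by rw [hkjr]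
        have p2 : (0:ℝ) ≤ (M:ℝ) * (((N:ℝ) - 2*t - 1) - j) :=
          mul_nonneg hMr.le (by linarith)
        nlinarith [hval', hsM, hMr, pk, p2]
    have hkt : k = t := by omega
    have hjr2 : (j:ℝ) = (N:ℝ) - 2*t := by
      have h1 : ((j : ℕ):ℝ) = ((N - T : ℕ):ℝ) := by rw [hjNTeq]
      rw [Nat.cast_sub hTN, hTr] at h1
      exact h1
    have hkr : (k:ℝ) = (t:ℝ) := by exact_mod_cast hkt
    -- step 4 : s ≤ M/2 from budget
    have hsle : s ≤ (M:ℝ)/2 := by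
      have hP2 : (2:ℝ) ^ (N - t) ≤ ((∏ n, R n : ℕ) : ℝ) := by
        rw [← hkj]; exact hprodlb
      rw [hc, heq, hTr] at hbudget
      have hTr2 : 2*((N:ℝ) - (2*t)) + 2*(j:ℝ) = 4*((N:ℝ)-2*t) := by rw [hjr2]; ring
      nlinarith [hQlb, hP2, hbudget]
    -- step 5 : s ≥ M/2 from objective
    have hsge : (M:ℝ)/2 ≤ s := by
      rw [hkr, hjr2] at hval'
      nlinarith [hval']
    refine ⟨S, ?_, ?_⟩
    · omega
    · rw [← hs]; linarith
  · rintro ⟨S, hScard, hSsum⟩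
    set R : Fin N → ℕ :=
      fun n => if h : (n:ℕ) < T then (if (⟨n, h⟩ : Fin T) ∈ S then 2 else 1) else 2 with hRdef
    have hRT : ∀ m : Fin T, R (Fin.castLE hTN m) = if m ∈ S then 2 else 1 := by
      intro m; simp only [hRdef]; rw [dif_pos (hmem m), hmk]
    have hRB : ∀ n ∈ B, R n = 2 := fun n hn => by
      simp only [hRdef]; rw [dif_neg (hBmem n hn)]
    have hR1 : ∀ n, 1 ≤ R n ∧ R n ≤ I n := by
      intro n
      rw [hIdef]
      simp only [hRdef]
      by_cases h : (n:ℕ) < T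
      · have := hw ⟨n, h⟩
        rw [dif_pos h, dif_pos h]
        constructor <;> (split <;> omega)
      · rw [dif_neg h, dif_neg h]
        omega
    have hprod : (∏ n, R n) = 2 ^ (N - T/2) := by
      rw [hsplitP]
      have h1 : (∏ m, R (Fin.castLE hTN m)) = 2 ^ S.card := by
        calc ∏ m, R (Fin.castLE hTN m) = ∏ m, if m ∈ S then 2 else 1 :=
            Finset.prod_congr rfl fun m _ => hRT m
          _ = ∏ m ∈ S, 2 := by rw [Finset.prod_ite_mem, Finset.univ_inter]
          _ = 2 ^ S.card := Finset.prod_const 2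
      have h2 : (∏ n ∈ B, R n) = 2 ^ (N - T) := by
        rw [Finset.prod_congr rfl hRB, Finset.prod_const, hcardB]
      rw [h1, h2, hScard, ← pow_add]
      congr 1
      omega
    have hsum : ((∑ n, I n * R n : ℕ) : ℝ) = 3 * M / 2 + 4 * ((N:ℝ) - T) := by
      push_cast
      rw [hsplit (fun n => (I n : ℝ) * R n)]
      have h1 : ∑ m, ((I (Fin.castLE hTN m) : ℝ) * (R (Fin.castLE hTN m)))
          = (M:ℝ) + M/2 := by
        have hterm : ∀ m : Fin T, (I (Fin.castLE hTN m) : ℝ) * (R (Fin.castLE hTN m))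
            = (w m : ℝ) + (if m ∈ S then (w m:ℝ) else 0) := by
          intro m
          rw [hIT, hRT]
          split <;> push_cast <;> ring
        rw [Finset.sum_congr rfl fun m _ => hterm m, Finset.sum_add_distrib, ← hMsum,
          Finset.sum_ite_mem, Finset.univ_inter, hSsum]
      have h2 : ∑ n ∈ B, ((I n : ℝ) * (R n)) = 4 * ((N:ℝ) - T) := by
        have hterm : ∀ n ∈ B, (I n : ℝ) * (R n) = 4 := by
          intro n hn
          rw [hIB n hn, hRB n hn]; norm_num
        rw [Finset.sum_congr rfl hterm, Finset.sum_const, hcardB, nsmul_eq_mul,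
          Nat.cast_sub hTN]
        ring
      rw [h1, h2]
      ring
    have hfobj : fObj a R = (M:ℝ) * (4*N - 3*T/2) + M/2 := by
      rw [hobj R (fun n => (hR1 n).1), hsplit]
      have h1 : ∑ m, (a (Fin.castLE hTN m) 1 +
          if 2 ≤ R (Fin.castLE hTN m) then a (Fin.castLE hTN m) 2 else 0)
          = 2*(M:ℝ)*T + ((M:ℝ) * t + M/2) := by
        have hterm : ∀ m : Fin T, a (Fin.castLE hTN m) 1 +
            (if 2 ≤ R (Fin.castLE hTN m) then a (Fin.castLE hTN m) 2 else 0)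
            = 2*(M:ℝ) + (if m ∈ S then (M:ℝ) + w m else 0) := by
          intro m
          rw [ha1T, ha2T, hRT]
          by_cases hm : m ∈ S <;> simp [hm]
        rw [Finset.sum_congr rfl fun m _ => hterm m, Finset.sum_add_distrib,
          Finset.sum_const, Finset.sum_ite_mem, Finset.univ_inter,
          Finset.sum_add_distrib, Finset.sum_const, hSsum, hScard, ht2]
        simp only [Finset.card_univ, Fintype.card_fin, nsmul_eq_mul]
        ring
      have h2 : ∑ n ∈ B, (a n 1 + if 2 ≤ R n then a n 2 else 0)
          = 4*(M:ℝ) * ((N:ℝ) - T) := by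
        have hterm : ∀ n ∈ B, (a n 1 + if 2 ≤ R n then a n 2 else 0) = 4*(M:ℝ) := by
          intro n hn
          rw [ha1B n hn, ha2B n hn, hRB n hn, if_pos (by norm_num)]
          ring
        rw [Finset.sum_congr rfl hterm, Finset.sum_const, hcardB, nsmul_eq_mul,
          Nat.cast_sub hTN]
        ring
      rw [h1, h2, hTr]
      ring
    refine ⟨R, hR1, ?_, ?_⟩
    · rw [hprod, hsum, hc]
      push_cast
      linarith
    · rw [hfobj]
end
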